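/- For each fixed t > 0, the function λ ↦ ∫_{-∞}^{x} ∫_{-∞}^{y} (1/(2√(2πt)))( e^{-(u-√(2λ)t)²/(2t)} + e^{-(u+√(2λ)t)²/(2t)} ) du dy is nondecreasing in λ ≥ 0 for every x ∈ ℝ. -/

import Mathlib

open Real MeasureTheory

noncomputable def rsF (t u : ℝ) : ℝ :=
  1 / (2 * Real.sqrt (2 * π * t)) * Real.exp (-u ^ 2 / (2 * t))

noncomputable def rsG (t y : ℝ) : ℝ := ∫ u in Set.Iic y, rsF t u

noncomputable def rsJ (t z : ℝ) : ℝ := ∫ y in Set.Iic z, rsG t y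

lemma rsF_nonneg (t u : ℝ) : 0 ≤ rsF t u := by
  unfold rsF; positivity

lemma rsF_integrable {t : ℝ} (ht : 0 < t) : Integrable (rsF t) := by
  have h : Integrable (fun u : ℝ => Real.exp (-(1 / (2 * t)) * u ^ 2)) :=
    integrable_exp_neg_mul_sq (by positivity)
  have h2 : (fun u : ℝ => Real.exp (-(1 / (2 * t)) * u ^ 2)) =
      fun u : ℝ => Real.exp (-u ^ 2 / (2 * t)) := by
    funext u; congr 1; ring
  rw [h2] at h
  unfold rsF
  exact h.const_mul _

lemma rsG_mono {t : ℝ} (ht : 0 < t) : Monotone (rsG t) := by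
  intro a b hab
  exact setIntegral_mono_set ((rsF_integrable ht).integrableOn)
    (Filter.Eventually.of_forall fun u => rsF_nonneg t u)
    (HasSubset.Subset.eventuallyLE (Set.Iic_subset_Iic.mpr hab))

lemma rsG_nonneg (t y : ℝ) : 0 ≤ rsG t y :=
  setIntegral_nonneg measurableSet_Iic fun u _ => rsF_nonneg t u

lemma rsG_le_total {t : ℝ} (ht : 0 < t) (y : ℝ) : rsG t y ≤ ∫ u, rsF t u :=
  setIntegral_le_integral (rsF_integrable ht) (Filter.Eventually.of_forall fun u => rsF_nonneg t u)

lemma rsF_le_exp {t : ℝ} (ht : 0 < t) (u : ℝ) :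
    rsF t u ≤ 1 / (2 * Real.sqrt (2 * π * t)) * Real.exp (t / 2) * Real.exp u := by
  unfold rsF
  have hexp : Real.exp (-u ^ 2 / (2 * t)) ≤ Real.exp (t / 2 + u) := by
    apply Real.exp_le_exp.mpr
    rw [div_le_iff₀ (by positivity)]
    nlinarith [sq_nonneg (u + t)]
  calc 1 / (2 * Real.sqrt (2 * π * t)) * Real.exp (-u ^ 2 / (2 * t))
      ≤ 1 / (2 * Real.sqrt (2 * π * t)) * Real.exp (t / 2 + u) :=
        mul_le_mul_of_nonneg_left hexp (by positivity)
    _ = _ := by rw [Real.exp_add]; ring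

lemma rsG_le_exp {t : ℝ} (ht : 0 < t) (y : ℝ) :
    rsG t y ≤ 1 / (2 * Real.sqrt (2 * π * t)) * Real.exp (t / 2) * Real.exp y := by
  have h1 : rsG t y ≤ ∫ u in Set.Iic y,
      1 / (2 * Real.sqrt (2 * π * t)) * Real.exp (t / 2) * Real.exp u := by
    apply setIntegral_mono ((rsF_integrable ht).integrableOn)
      (((integrableOn_exp_Iic y).const_mul _))
      fun u => rsF_le_exp ht u
  calc rsG t y ≤ _ := h1
    _ = 1 / (2 * Real.sqrt (2 * π * t)) * Real.exp (t / 2) * ∫ u in Set.Iic y, Real.exp u := by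
        rw [integral_const_mul]
    _ = _ := by rw [integral_exp_Iic]

lemma rsG_measurable {t : ℝ} (ht : 0 < t) : Measurable (rsG t) :=
  (rsG_mono ht).measurable

lemma shift_integral_Iic (h : ℝ → ℝ) (s x : ℝ) :
    ∫ y in Set.Iic x, h (y - s) = ∫ y in Set.Iic (x - s), h y := by
  rw [← integral_indicator measurableSet_Iic, ← integral_indicator measurableSet_Iic]
  have key : (Set.Iic x).indicator (fun y => h (y - s)) =
      fun y => (Set.Iic (x - s)).indicator h (y - s) := by
    funext y
    simp only [Set.indicator_apply, Set.mem_Iic, sub_le_sub_iff_right]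
  rw [key]
  exact integral_sub_right_eq_self ((Set.Iic (x - s)).indicator h) s

lemma shift_integral_Ioc (h : ℝ → ℝ) (s a b : ℝ) :
    ∫ y in Set.Ioc a b, h (y - s) = ∫ y in Set.Ioc (a - s) (b - s), h y := by
  rw [← integral_indicator measurableSet_Ioc, ← integral_indicator measurableSet_Ioc]
  have key : (Set.Ioc a b).indicator (fun y => h (y - s)) =
      fun y => (Set.Ioc (a - s) (b - s)).indicator h (y - s) := by
    funext y
    simp only [Set.indicator_apply, Set.mem_Ioc, sub_le_sub_iff_right, sub_lt_sub_iff_right]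
  rw [key]
  exact integral_sub_right_eq_self ((Set.Ioc (a - s) (b - s)).indicator h) s

lemma rsG_shift_integrableOn_Iic {t : ℝ} (ht : 0 < t) (s x : ℝ) :
    IntegrableOn (fun y => rsG t (y - s)) (Set.Iic x) := by
  apply Integrable.mono' (g := fun y => (1 / (2 * Real.sqrt (2 * π * t)) * Real.exp (t / 2)
      * Real.exp (-s)) * Real.exp y)
    (((integrableOn_exp_Iic x).const_mul _))
    (((rsG_measurable ht).comp (measurable_id.sub_const s)).aestronglyMeasurable)
  apply Filter.Eventually.of_forall
  intro y
  simp only [Function.comp_apply, id_eq]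
  rw [Real.norm_of_nonneg (rsG_nonneg t _)]
  calc rsG t (y - s) ≤ 1 / (2 * Real.sqrt (2 * π * t)) * Real.exp (t / 2) * Real.exp (y - s) :=
        rsG_le_exp ht _
    _ = _ := by rw [Real.exp_sub, Real.exp_neg]; ring

lemma rsG_integrableOn_Iic {t : ℝ} (ht : 0 < t) (x : ℝ) :
    IntegrableOn (rsG t) (Set.Iic x) := by
  have := rsG_shift_integrableOn_Iic ht 0 x
  simpa using this

lemma rsG_shift_integrableOn_Ioc {t : ℝ} (ht : 0 < t) (s a b : ℝ) :
    IntegrableOn (fun y => rsG t (y + s)) (Set.Ioc a b) := by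
  apply Integrable.mono' (g := fun _ => ∫ u, rsF t u)
    (integrableOn_const measure_Ioc_lt_top.ne)
    (((rsG_measurable ht).comp (measurable_id.add_const s)).aestronglyMeasurable)
  apply Filter.Eventually.of_forall
  intro y
  simp only [Function.comp_apply, id_eq]
  rw [Real.norm_of_nonneg (rsG_nonneg t _)]
  exact rsG_le_total ht _

lemma rsJ_key {t : ℝ} (ht : 0 < t) (x : ℝ) {μ₁ μ₂ : ℝ} (h1 : 0 ≤ μ₁) (h12 : μ₁ ≤ μ₂) :
    rsJ t (x - μ₁) + rsJ t (x + μ₁) ≤ rsJ t (x - μ₂) + rsJ t (x + μ₂) := by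
  have hd1 : rsJ t (x - μ₁) - rsJ t (x - μ₂) = ∫ y in Set.Ioc (x - μ₂) (x - μ₁), rsG t y := by
    rw [show rsJ t (x - μ₁) - rsJ t (x - μ₂) = (∫ y in Set.Iic (x - μ₁), rsG t y)
        - ∫ y in Set.Iic (x - μ₂), rsG t y from rfl,
      intervalIntegral.integral_Iic_sub_Iic (rsG_integrableOn_Iic ht _) (rsG_integrableOn_Iic ht _),
      intervalIntegral.integral_of_le (by linarith)]
  have hd2 : rsJ t (x + μ₂) - rsJ t (x + μ₁) = ∫ y in Set.Ioc (x + μ₁) (x + μ₂), rsG t y := by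
    rw [show rsJ t (x + μ₂) - rsJ t (x + μ₁) = (∫ y in Set.Iic (x + μ₂), rsG t y)
        - ∫ y in Set.Iic (x + μ₁), rsG t y from rfl,
      intervalIntegral.integral_Iic_sub_Iic (rsG_integrableOn_Iic ht _) (rsG_integrableOn_Iic ht _),
      intervalIntegral.integral_of_le (by linarith)]
  have hshift : ∫ y in Set.Ioc (x + μ₁) (x + μ₂), rsG t y
      = ∫ y in Set.Ioc (x - μ₂) (x - μ₁), rsG t (y + (μ₁ + μ₂)) := by
    have := shift_integral_Ioc (rsG t) (-(μ₁ + μ₂)) (x - μ₂) (x - μ₁)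
    simp only [sub_neg_eq_add] at this
    rw [show x - μ₂ + (μ₁ + μ₂) = x + μ₁ by ring, show x - μ₁ + (μ₁ + μ₂) = x + μ₂ by ring] at this
    exact this.symm
  have hcomp : (∫ y in Set.Ioc (x - μ₂) (x - μ₁), rsG t y)
      ≤ ∫ y in Set.Ioc (x - μ₂) (x - μ₁), rsG t (y + (μ₁ + μ₂)) := by
    apply setIntegral_mono
      ((rsG_integrableOn_Iic ht (x - μ₁)).mono_set Set.Ioc_subset_Iic_self)
      (rsG_shift_integrableOn_Ioc ht _ _ _)
    intro y
    exact rsG_mono ht (by linarith)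
  have hfin : rsJ t (x - μ₁) - rsJ t (x - μ₂) ≤ rsJ t (x + μ₂) - rsJ t (x + μ₁) := by
    rw [hd1, hd2, hshift]
    exact hcomp
  linarith

lemma double_eq {t : ℝ} (ht : 0 < t) (x μ : ℝ) :
    (∫ y in Set.Iic x, ∫ u in Set.Iic y,
      1 / (2 * Real.sqrt (2 * π * t)) *
        (Real.exp (-(u - μ) ^ 2 / (2 * t)) + Real.exp (-(u + μ) ^ 2 / (2 * t))))
      = rsJ t (x - μ) + rsJ t (x + μ) := by
  have hpt : ∀ u : ℝ, 1 / (2 * Real.sqrt (2 * π * t)) *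
      (Real.exp (-(u - μ) ^ 2 / (2 * t)) + Real.exp (-(u + μ) ^ 2 / (2 * t)))
      = rsF t (u - μ) + rsF t (u - (-μ)) := by
    intro u
    simp only [rsF, sub_neg_eq_add]
    ring
  have hinner : ∀ y : ℝ, (∫ u in Set.Iic y,
      1 / (2 * Real.sqrt (2 * π * t)) *
        (Real.exp (-(u - μ) ^ 2 / (2 * t)) + Real.exp (-(u + μ) ^ 2 / (2 * t))))
      = rsG t (y - μ) + rsG t (y + μ) := by
    intro y
    rw [show (fun u => 1 / (2 * Real.sqrt (2 * π * t)) *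
        (Real.exp (-(u - μ) ^ 2 / (2 * t)) + Real.exp (-(u + μ) ^ 2 / (2 * t))))
        = fun u => rsF t (u - μ) + rsF t (u - (-μ)) from funext hpt,
      integral_add (((rsF_integrable ht).comp_sub_right μ).integrableOn)
        (((rsF_integrable ht).comp_sub_right (-μ)).integrableOn),
      shift_integral_Iic (rsF t) μ y, shift_integral_Iic (rsF t) (-μ) y,
      sub_neg_eq_add]
    rfl
  rw [show (fun y => ∫ u in Set.Iic y,
      1 / (2 * Real.sqrt (2 * π * t)) *
        (Real.exp (-(u - μ) ^ 2 / (2 * t)) + Real.exp (-(u + μ) ^ 2 / (2 * t))))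
      = fun y => rsG t (y - μ) + rsG t (y - (-μ)) from funext (by
        intro y; rw [hinner y, sub_neg_eq_add]),
    integral_add (rsG_shift_integrableOn_Iic ht μ x) (rsG_shift_integrableOn_Iic ht (-μ) x),
    shift_integral_Iic (rsG t) μ x, shift_integral_Iic (rsG t) (-μ) x, sub_neg_eq_add]
  rfl

theorem second_integral_condition_monotone (t : ℝ) (ht : 0 < t) (x : ℝ) :
    MonotoneOn (fun l : ℝ =>
      ∫ y in Set.Iic x, ∫ u in Set.Iic y,
        1 / (2 * Real.sqrt (2 * π * t)) *
          (exp (-(u - Real.sqrt (2 * l) * t) ^ 2 / (2 * t)) +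
           exp (-(u + Real.sqrt (2 * l) * t) ^ 2 / (2 * t))))
      (Set.Ici (0:ℝ)) := by
  intro l1 hl1 l2 _ hl
  have hμ1 : 0 ≤ Real.sqrt (2 * l1) * t := mul_nonneg (Real.sqrt_nonneg _) ht.le
  have hμ12 : Real.sqrt (2 * l1) * t ≤ Real.sqrt (2 * l2) * t :=
    mul_le_mul_of_nonneg_right (Real.sqrt_le_sqrt (by linarith)) ht.le
  simp only
  rw [double_eq ht x (Real.sqrt (2 * l1) * t), double_eq ht x (Real.sqrt (2 * l2) * t)]
  exact rsJ_key ht x hμ1 hμ12
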